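/- Assume in addition that φ'(0)·g(0) ≠ 0, let ψ = φ^⟨-1⟩ be the compositional inverse of φ, and let B be an upper triangular matrix satisfying A·B = B·A = I. Then for every nonnegative integer s and all 1 ≤ k ≤ n, [B^s]_{k,n} = (a_k/a_n)·(1/k!)·(d/dt)^n_{t=0}[ (ψ^⟨s⟩(t))^k · ( g(ψ(t))·g(ψ^⟨2⟩(t)) ⋯ g(ψ^⟨s⟩(t)) )^{-1} ], where the empty product (s = 0) equals 1 and the outer inverse is the multiplicative inverse of a power series with nonzero constant term. -/

import Mathlib

open PowerSeries Finset

noncomputable section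

/-- Product of two infinite matrices of complex numbers (indexed by positive integers,
upper triangular): `[A·B]_{k,n} = ∑_{j=k}^{n} [A]_{k,j}·[B]_{j,n}`. -/
def triMul (A B : ℕ → ℕ → ℂ) : ℕ → ℕ → ℂ :=
  fun k n => ∑ j ∈ Finset.Icc k n, A k j * B j n

/-- The identity matrix. -/
def triId : ℕ → ℕ → ℂ := fun k n => if k = n then 1 else 0

/-- Powers of a matrix: `A^0 = I`, `A^{s+1} = A^s · A`. -/
def triPow (A : ℕ → ℕ → ℂ) : ℕ → ℕ → ℕ → ℂ
  | 0 => triId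
  | s + 1 => triMul (triPow A s) A

/-- Composition `F ∘ G` of formal power series (intended for `G` with zero
constant coefficient): the coefficient of `t^n` is `∑_{j=0}^{n} F_j · [t^n](G^j)`. -/
def psComp (F G : PowerSeries ℂ) : PowerSeries ℂ :=
  PowerSeries.mk fun n =>
    ∑ j ∈ Finset.range (n + 1), (PowerSeries.coeff j F) * (PowerSeries.coeff n (G ^ j))

/-- Iterated composition: `φ^⟨0⟩ = t`, `φ^⟨s+1⟩ = φ^⟨s⟩ ∘ φ`. -/
def iterComp (φ : PowerSeries ℂ) : ℕ → PowerSeries ℂ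
  | 0 => PowerSeries.X
  | s + 1 => psComp (iterComp φ s) φ

-- AUX
lemma coeff_psComp (F G : PowerSeries ℂ) (n : ℕ) :
    coeff n (psComp F G) = ∑ j ∈ range (n+1), coeff j F * coeff n (G ^ j) := by
  simp [psComp]

lemma coeff_pow_eq_zero {G : PowerSeries ℂ} (hG : constantCoeff G = 0)
    {n j : ℕ} (h : n < j) : coeff n (G ^ j) = 0 := by
  obtain ⟨H, rfl⟩ := PowerSeries.X_dvd_iff.mpr hG
  rw [mul_pow, PowerSeries.coeff_mul]
  apply Finset.sum_eq_zero
  rintro ⟨p, q⟩ hpq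
  have hp : p + q = n := Finset.HasAntidiagonal.mem_antidiagonal.mp hpq
  rw [coeff_X_pow, if_neg (by omega), zero_mul]

lemma coeff_pow_mul_eq_zero {G H : PowerSeries ℂ} (hG : constantCoeff G = 0)
    {n j : ℕ} (h : n < j) : coeff n (G ^ j * H) = 0 := by
  rw [PowerSeries.coeff_mul]
  apply Finset.sum_eq_zero
  rintro ⟨p, q⟩ hpq
  have hp : p + q = n := Finset.HasAntidiagonal.mem_antidiagonal.mp hpq
  rw [coeff_pow_eq_zero hG (by omega), zero_mul]

lemma coeff_psComp' {G : PowerSeries ℂ} (hG : constantCoeff G = 0) (F : PowerSeries ℂ)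
    {n m : ℕ} (h : n < m) :
    coeff n (psComp F G) = ∑ j ∈ range m, coeff j F * coeff n (G ^ j) := by
  rw [coeff_psComp]
  apply Finset.sum_subset (Finset.range_subset_range.mpr h)
  intro j hj hj'
  rw [coeff_pow_eq_zero hG (by simp only [mem_range] at hj'; omega), mul_zero]
lemma coeff_eval₂ {G : PowerSeries ℂ} (hG : constantCoeff G = 0) (p : Polynomial ℂ) (n : ℕ) :
    coeff n (p.eval₂ C G) = ∑ j ∈ range (n+1), p.coeff j * coeff n (G ^ j) := by
  have hd : p.natDegree < max n p.natDegree + 1 := Nat.lt_succ_of_le (le_max_right _ _)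
  rw [Polynomial.eval₂_eq_sum_range' C hd G, map_sum]
  have h1 : ∀ j ∈ range (max n p.natDegree + 1),
      coeff n (C (p.coeff j) * G ^ j) = p.coeff j * coeff n (G ^ j) := fun j _ => by
    rw [coeff_C_mul]
  rw [Finset.sum_congr rfl h1]
  symm
  apply Finset.sum_subset (Finset.range_subset_range.mpr (Nat.succ_le_succ (le_max_left _ _)))
  intro j hj hj'
  rw [coeff_pow_eq_zero hG (by simp only [mem_range] at hj'; omega), mul_zero]

lemma coeff_psComp_eval₂ {G : PowerSeries ℂ} (hG : constantCoeff G = 0) (F : PowerSeries ℂ)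
    {n m : ℕ} (h : n < m) :
    coeff n (psComp F G) = coeff n ((trunc m F).eval₂ C G) := by
  rw [coeff_eval₂ hG, coeff_psComp]
  refine Finset.sum_congr rfl fun j hj => ?_
  rw [coeff_trunc, if_pos (by simp only [mem_range] at hj; omega)]

lemma psComp_one (G : PowerSeries ℂ) : psComp 1 G = 1 := by
  ext n
  rw [coeff_psComp]
  rw [Finset.sum_eq_single 0]
  · simp
  · intro j hj hj0
    rw [PowerSeries.coeff_one, if_neg hj0, zero_mul]
  · intro h; simp at h

lemma psComp_mul {G : PowerSeries ℂ} (hG : constantCoeff G = 0) (F₁ F₂ : PowerSeries ℂ) :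
    psComp (F₁ * F₂) G = psComp F₁ G * psComp F₂ G := by
  ext n
  rw [PowerSeries.coeff_mul]
  have h1 : ∀ p ∈ antidiagonal n,
      coeff p.1 (psComp F₁ G) * coeff p.2 (psComp F₂ G)
      = coeff p.1 ((trunc (n+1) F₁).eval₂ C G) *
        coeff p.2 ((trunc (n+1) F₂).eval₂ C G) := by
    rintro ⟨u, v⟩ huv
    have h : u + v = n := Finset.HasAntidiagonal.mem_antidiagonal.mp huv
    rw [coeff_psComp_eval₂ hG F₁ (show u < n+1 by omega), coeff_psComp_eval₂ hG F₂ (show v < n+1 by omega)]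
  rw [Finset.sum_congr rfl h1, ← PowerSeries.coeff_mul, ← Polynomial.eval₂_mul]
  rw [coeff_psComp_eval₂ hG (F₁ * F₂) (Nat.lt_succ_self n), coeff_eval₂ hG, coeff_eval₂ hG]
  refine Finset.sum_congr rfl fun j hj => ?_
  have hjn : j < n + 1 := by simpa using hj
  congr 1
  rw [Polynomial.coeff_mul, coeff_trunc, if_pos hjn, PowerSeries.coeff_mul]
  refine Finset.sum_congr rfl fun p hp => ?_
  have h : p.1 + p.2 = j := Finset.HasAntidiagonal.mem_antidiagonal.mp hp
  rw [coeff_trunc, if_pos (by omega), coeff_trunc, if_pos (by omega)]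

lemma psComp_pow {G : PowerSeries ℂ} (hG : constantCoeff G = 0) (F : PowerSeries ℂ) (i : ℕ) :
    psComp (F ^ i) G = (psComp F G) ^ i := by
  induction i with
  | zero => simpa using psComp_one G
  | succ i ih => rw [pow_succ, psComp_mul hG, ih, pow_succ]

lemma psComp_prod {G : PowerSeries ℂ} (hG : constantCoeff G = 0) {ι : Type*}
    (s : Finset ι) (f : ι → PowerSeries ℂ) :
    psComp (∏ i ∈ s, f i) G = ∏ i ∈ s, psComp (f i) G := by
  induction s using Finset.cons_induction with
  | empty => simpa using psComp_one G
  | cons a s ha ih => rw [Finset.prod_cons, Finset.prod_cons, psComp_mul hG, ih]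

lemma psComp_X_right (F : PowerSeries ℂ) : psComp F PowerSeries.X = F := by
  ext n
  rw [coeff_psComp, Finset.sum_eq_single n]
  · rw [coeff_X_pow, if_pos rfl, mul_one]
  · intro j hj hjn
    rw [coeff_X_pow, if_neg (fun h => hjn h.symm), mul_zero]
  · intro h; simp at h

lemma constantCoeff_psComp (F G : PowerSeries ℂ) :
    constantCoeff (psComp F G) = constantCoeff F := by
  have := coeff_psComp F G 0
  simp only [range_one, sum_singleton, pow_zero, PowerSeries.coeff_zero_eq_constantCoeff,
    map_one, mul_one] at this
  simpa [PowerSeries.coeff_zero_eq_constantCoeff] using this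

lemma psComp_assoc {F G H : PowerSeries ℂ} (hG : constantCoeff G = 0)
    (hH : constantCoeff H = 0) :
    psComp (psComp F G) H = psComp F (psComp G H) := by
  ext n
  rw [coeff_psComp, coeff_psComp]
  have h1 : ∀ j ∈ range (n+1),
      coeff j (psComp F G) * coeff n (H ^ j)
      = ∑ i ∈ range (n+1), coeff i F * coeff j (G ^ i) * coeff n (H ^ j) := by
    intro j hj
    rw [coeff_psComp' hG F (mem_range.mp hj), Finset.sum_mul]
  rw [Finset.sum_congr rfl h1, Finset.sum_comm]
  refine Finset.sum_congr rfl fun i hi => ?_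
  rw [← psComp_pow hH, coeff_psComp, Finset.mul_sum]
  exact (Finset.sum_congr rfl fun j hj => by ring)

lemma psComp_inv {P G : PowerSeries ℂ} (hG : constantCoeff G = 0)
    (hP : constantCoeff P ≠ 0) : psComp P⁻¹ G = (psComp P G)⁻¹ := by
  have h1 : constantCoeff (psComp P G) ≠ 0 := by rw [constantCoeff_psComp]; exact hP
  rw [PowerSeries.eq_inv_iff_mul_eq_one h1, ← psComp_mul hG,
    PowerSeries.inv_mul_cancel P hP, psComp_one]

lemma constantCoeff_iterComp {ψ : PowerSeries ℂ} (hψ : constantCoeff ψ = 0) (s : ℕ) :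
    constantCoeff (iterComp ψ s) = 0 := by
  induction s with
  | zero => exact PowerSeries.constantCoeff_X
  | succ s ih => rw [iterComp, constantCoeff_psComp]; exact ih

lemma sum_Icc_swap (f : ℕ → ℕ → ℂ) (k n : ℕ) :
    ∑ j ∈ Icc k n, ∑ i ∈ Icc k j, f i j = ∑ i ∈ Icc k n, ∑ j ∈ Icc i n, f i j := by
  rw [Finset.sum_sigma', Finset.sum_sigma']
  refine Finset.sum_nbij' (fun p => ⟨p.2, p.1⟩) (fun p => ⟨p.2, p.1⟩) ?_ ?_ ?_ ?_ ?_ <;>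
    simp only [Finset.mem_sigma, Finset.mem_Icc] <;> intros <;> first | omega | rfl | trivial

def Dmat (a : ℕ → ℂ) (ψ g : PowerSeries ℂ) (s k n : ℕ) : ℂ :=
  a k / a n * (1 / k.factorial) *
    ((n.factorial : ℂ) * coeff n ((iterComp ψ s) ^ k *
      (∏ i ∈ Finset.range s, psComp g (iterComp ψ (i + 1)))⁻¹))


/-- Corollary (h = 1, inverse): if `φ'(0)·g(0) ≠ 0`, `ψ = φ^⟨-1⟩`, and `B` is an upper
triangular two-sided inverse of `A`, then
`[B^s]_{k,n} = (a_k/a_n)·(1/k!)·(d/dt)^n_{t=0}[(ψ^⟨s⟩(t))^k·(g(ψ(t))·g(ψ^⟨2⟩(t))⋯g(ψ^⟨s⟩(t)))^{-1}]`. -/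
theorem stmt6 (a : ℕ → ℂ) (ha : ∀ n, 1 ≤ n → a n ≠ 0)
    (φ g : PowerSeries ℂ)
    (hφ0 : constantCoeff φ = 0)
    (hne : constantCoeff (derivativeFun φ) * constantCoeff g ≠ 0)
    (ψ : PowerSeries ℂ) (hψ0 : constantCoeff ψ = 0)
    (hψφ : psComp ψ φ = PowerSeries.X) (hφψ : psComp φ ψ = PowerSeries.X)
    (A B : ℕ → ℕ → ℂ)
    (hAtri : ∀ k n, n < k → A k n = 0)
    (hBtri : ∀ k n, n < k → B k n = 0)
    (hA : ∀ k n, 1 ≤ k → k ≤ n →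
      A k n = a k / a n * (1 / k.factorial) *
        ((n.factorial : ℂ) * coeff n (φ ^ k * g)))
    (hAB : ∀ k n, 1 ≤ k → 1 ≤ n → triMul A B k n = triId k n)
    (hBA : ∀ k n, 1 ≤ k → 1 ≤ n → triMul B A k n = triId k n)
    (s : ℕ) (k n : ℕ) (hk : 1 ≤ k) (hkn : k ≤ n) :
    triPow B s k n = a k / a n * (1 / k.factorial) *
      ((n.factorial : ℂ) * coeff n ((iterComp ψ s) ^ k *
        (∏ i ∈ Finset.range s, psComp g (iterComp ψ (i + 1)))⁻¹)) := by
  have hg0 : constantCoeff g ≠ 0 := fun h => hne (by rw [h, mul_zero])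
  have hΨ0 : ∀ t, constantCoeff (iterComp ψ t) = 0 := constantCoeff_iterComp hψ0
  have hQ0 : ∀ t, constantCoeff (∏ i ∈ range t, psComp g (iterComp ψ (i+1))) ≠ 0 := by
    intro t
    rw [map_prod]
    exact Finset.prod_ne_zero_iff.mpr fun i _ => by rw [constantCoeff_psComp]; exact hg0
  suffices h : ∀ s k n, 1 ≤ k → k ≤ n → triPow B s k n = Dmat a ψ g s k n by
    exact h s k n hk hkn
  clear hk hkn s k n
  intro s
  induction s with
  | zero =>
    intro k n hk hkn
    show triId k n = _
    unfold Dmat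
    rw [show iterComp ψ 0 = PowerSeries.X from rfl, Finset.range_zero, Finset.prod_empty,
      inv_one, mul_one, coeff_X_pow]
    unfold triId
    by_cases h : k = n
    · subst h
      simp only [if_pos rfl]
      rw [div_self (ha k hk)]
      have hkf : ((k.factorial : ℂ)) ≠ 0 := Nat.cast_ne_zero.mpr k.factorial_ne_zero
      field_simp
    · rw [if_neg h, if_neg (fun hh => h hh.symm), mul_zero, mul_zero]
  | succ s ih =>
    intro k n hk hkn
    have e1 : ∀ t, psComp (iterComp ψ (t+1)) φ = iterComp ψ t := by
      intro t
      show psComp (psComp (iterComp ψ t) ψ) φ = _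
      rw [psComp_assoc hψ0 hφ0, hψφ, psComp_X_right]
    have hFG : psComp ((iterComp ψ (s+1)) ^ k *
          (∏ i ∈ range (s+1), psComp g (iterComp ψ (i+1)))⁻¹) φ * g
        = (iterComp ψ s) ^ k * (∏ i ∈ range s, psComp g (iterComp ψ (i+1)))⁻¹ := by
      have e2 : psComp (∏ i ∈ range (s+1), psComp g (iterComp ψ (i+1))) φ
          = g * ∏ i ∈ range s, psComp g (iterComp ψ (i+1)) := by
        rw [psComp_prod hφ0]
        have h3 : ∀ i ∈ range (s+1), psComp (psComp g (iterComp ψ (i+1))) φ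
            = psComp g (iterComp ψ i) := by
          intro i _
          rw [psComp_assoc (hΨ0 (i+1)) hφ0, e1 i]
        rw [Finset.prod_congr rfl h3, Finset.prod_range_succ']
        rw [show iterComp ψ 0 = PowerSeries.X from rfl, psComp_X_right, mul_comm]
      have e3 : (g * ∏ i ∈ range s, psComp g (iterComp ψ (i+1)))⁻¹ * g
          = (∏ i ∈ range s, psComp g (iterComp ψ (i+1)))⁻¹ := by
        have hgq : constantCoeff (g * ∏ i ∈ range s, psComp g (iterComp ψ (i+1))) ≠ 0 := by
          rw [map_mul]; exact mul_ne_zero hg0 (hQ0 s)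
        rw [PowerSeries.eq_inv_iff_mul_eq_one (hQ0 s), mul_assoc,
          PowerSeries.inv_mul_cancel _ hgq]
      rw [psComp_mul hφ0, psComp_pow hφ0, e1 s, psComp_inv hφ0 (hQ0 (s+1)), e2,
        mul_assoc, e3]
    have hsum : ∀ m, k ≤ m →
        ∑ i ∈ Icc k m, coeff i ((iterComp ψ (s+1)) ^ k *
            (∏ i ∈ range (s+1), psComp g (iterComp ψ (i+1)))⁻¹) * coeff m (φ ^ i * g)
          = coeff m ((iterComp ψ s) ^ k *
            (∏ i ∈ range s, psComp g (iterComp ψ (i+1)))⁻¹) := by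
      intro m hkm
      set F := (iterComp ψ (s+1)) ^ k *
        (∏ i ∈ range (s+1), psComp g (iterComp ψ (i+1)))⁻¹ with hF
      calc ∑ i ∈ Icc k m, coeff i F * coeff m (φ ^ i * g)
          = ∑ i ∈ range (m+1), coeff i F * coeff m (φ ^ i * g) := by
            apply Finset.sum_subset
            · intro i hi
              obtain ⟨h1, h2⟩ := mem_Icc.mp hi
              exact mem_range.mpr (by omega)
            · intro i hi hi'
              have h1 : i < m + 1 := mem_range.mp hi
              have h2 : ¬ (k ≤ i ∧ i ≤ m) := fun hc => hi' (mem_Icc.mpr hc)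
              have hik : i < k := by omega
              rw [hF, coeff_pow_mul_eq_zero (hΨ0 (s+1)) hik, zero_mul]
        _ = ∑ i ∈ range (m+1), coeff i F *
              ∑ p ∈ antidiagonal m, coeff p.1 (φ ^ i) * coeff p.2 g := by
            exact Finset.sum_congr rfl fun i _ => by rw [← PowerSeries.coeff_mul]
        _ = ∑ p ∈ antidiagonal m,
              (∑ i ∈ range (m+1), coeff i F * coeff p.1 (φ ^ i)) * coeff p.2 g := by
            simp only [Finset.mul_sum]
            rw [Finset.sum_comm]
            exact Finset.sum_congr rfl fun p _ => by
              rw [Finset.sum_mul]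
              exact Finset.sum_congr rfl fun i _ => by ring
        _ = ∑ p ∈ antidiagonal m, coeff p.1 (psComp F φ) * coeff p.2 g := by
            refine Finset.sum_congr rfl fun p hp => ?_
            have hpm : p.1 + p.2 = m := Finset.HasAntidiagonal.mem_antidiagonal.mp hp
            rw [coeff_psComp' hφ0 F (show p.1 < m+1 by omega)]
        _ = coeff m (psComp F φ * g) := (PowerSeries.coeff_mul _ _ _).symm
        _ = _ := by rw [hF, hFG]
    have key : ∀ m, k ≤ m →
        Dmat a ψ g s k m = ∑ i ∈ Icc k m, Dmat a ψ g (s+1) k i * A i m := by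
      intro m hkm
      have ham := ha m (hk.trans hkm)
      have hkf : ((k.factorial : ℂ)) ≠ 0 := Nat.cast_ne_zero.mpr k.factorial_ne_zero
      have hterm : ∀ i ∈ Icc k m, Dmat a ψ g (s+1) k i * A i m
          = a k / a m * (1 / k.factorial) * (m.factorial : ℂ) *
            (coeff i ((iterComp ψ (s+1)) ^ k *
              (∏ i ∈ range (s+1), psComp g (iterComp ψ (i+1)))⁻¹) *
             coeff m (φ ^ i * g)) := by
        intro i hi
        obtain ⟨hki, him⟩ := mem_Icc.mp hi
        rw [hA i m (hk.trans hki) him]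
        unfold Dmat
        have hai := ha i (hk.trans hki)
        have hif : ((i.factorial : ℂ)) ≠ 0 := Nat.cast_ne_zero.mpr i.factorial_ne_zero
        field_simp
      rw [Finset.sum_congr rfl hterm, ← Finset.mul_sum, hsum m hkm]
      unfold Dmat
      ring
    show triMul (triPow B s) B k n = _
    unfold triMul
    calc ∑ j ∈ Icc k n, triPow B s k j * B j n
        = ∑ j ∈ Icc k n, (∑ i ∈ Icc k j, Dmat a ψ g (s+1) k i * A i j) * B j n := by
          refine Finset.sum_congr rfl fun j hj => ?_
          rw [ih k j hk (mem_Icc.mp hj).1, key j (mem_Icc.mp hj).1]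
      _ = ∑ j ∈ Icc k n, ∑ i ∈ Icc k j, Dmat a ψ g (s+1) k i * A i j * B j n :=
          Finset.sum_congr rfl fun j _ => by rw [Finset.sum_mul]
      _ = ∑ i ∈ Icc k n, ∑ j ∈ Icc i n, Dmat a ψ g (s+1) k i * A i j * B j n :=
          sum_Icc_swap _ k n
      _ = ∑ i ∈ Icc k n, Dmat a ψ g (s+1) k i * triId i n := by
          refine Finset.sum_congr rfl fun i hi => ?_
          rw [← hAB i n (hk.trans (mem_Icc.mp hi).1) (hk.trans hkn)]
          unfold triMul
          rw [Finset.mul_sum]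
          exact Finset.sum_congr rfl fun j _ => by ring
      _ = Dmat a ψ g (s+1) k n := by
          rw [Finset.sum_eq_single n]
          · simp [triId]
          · intro i hi hin; simp [triId, hin]
          · intro h; exact absurd (mem_Icc.mpr ⟨hkn, le_refl n⟩) h
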